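/- Let n ≥ 4, let π/2 ≤ η ≤ π, and equip each digraph Y_{k,n−k} with its η-function θ. Suppose a, b ∈ {0,…,n} satisfy a ≥ n−a, b ≥ n−b (i.e., a, b ≥ n/2) and a ≠ b. Then the characteristic polynomials of U_θ^{(2,+)}(Y_{a,n−a}) and U_θ^{(2,+)}(Y_{b,n−b}) are different. -/

import Mathlib

open Matrix Polynomial

noncomputable section

variable {V : Type} [Fintype V] [DecidableEq V]

/-- The set of symmetric arcs of a simple graph `G`: ordered pairs of adjacent vertices. -/
abbrev GArc (G : SimpleGraph V) : Type := {p : V × V // G.Adj p.1 p.2}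

/-- The origin of an arc. -/
def arcO {G : SimpleGraph V} (a : GArc G) : V := a.1.1

/-- The terminus of an arc. -/
def arcT {G : SimpleGraph V} (a : GArc G) : V := a.1.2

/-- The inverse of an arc. -/
def arcInv {G : SimpleGraph V} (a : GArc G) : GArc G := ⟨(a.1.2, a.1.1), a.2.symm⟩

/-- The boundary matrix `K`, with `K_{v,a} = δ_{v,t(a)} / √(deg t(a))`. -/
def bdK (G : SimpleGraph V) [DecidableRel G.Adj] : Matrix V (GArc G) ℂ :=
  fun v a => if v = arcT a then ((1 / Real.sqrt (G.degree (arcT a)) : ℝ) : ℂ) else 0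

/-- The coin operator `C = 2K*K - I`. -/
def coinC (G : SimpleGraph V) [DecidableRel G.Adj] : Matrix (GArc G) (GArc G) ℂ :=
  (2 : ℂ) • ((bdK G)ᴴ * bdK G) - 1

/-- The shift operator `S`, with `S_{ab} = δ_{a,b⁻¹}`. -/
def shiftS (G : SimpleGraph V) : Matrix (GArc G) (GArc G) ℂ :=
  fun a b => if a = arcInv b then 1 else 0

/-- The perturbed shift `S_θ`, with `(S_θ)_{ab} = e^{iθ(b)} δ_{a,b⁻¹}`. -/
def shiftStheta (G : SimpleGraph V) (θ : GArc G → ℝ) : Matrix (GArc G) (GArc G) ℂ :=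
  fun a b => if a = arcInv b then Complex.exp ((θ b : ℂ) * Complex.I) else 0

/-- The Grover transfer matrix `U = SC`. -/
def groverU (G : SimpleGraph V) [DecidableRel G.Adj] : Matrix (GArc G) (GArc G) ℂ :=
  shiftS G * coinC G

/-- The transfer matrix `U_θ = S_θ C`. -/
def transferU (G : SimpleGraph V) [DecidableRel G.Adj] (θ : GArc G → ℝ) :
    Matrix (GArc G) (GArc G) ℂ :=
  shiftStheta G θ * coinC G

/-- The diagonal matrix `D_θ` with `(D_θ)_{ab} = e^{iθ(a)} δ_{ab}`. -/
def Dtheta (G : SimpleGraph V) (θ : GArc G → ℝ) : Matrix (GArc G) (GArc G) ℂ :=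
  Matrix.diagonal fun a => Complex.exp ((θ a : ℂ) * Complex.I)

/-- The positive support of a (real-valued) complex matrix. -/
def suppPos {α : Type} (M : Matrix α α ℂ) : Matrix α α ℂ :=
  fun a b => if 0 < (M a b).re then 1 else 0

/-- The negative support of a (real-valued) complex matrix. -/
def suppNeg {α : Type} (M : Matrix α α ℂ) : Matrix α α ℂ :=
  fun a b => if (M a b).re < 0 then 1 else 0

/-- The positive support of a real matrix. -/
def suppPosR {α : Type} (M : Matrix α α ℝ) : Matrix α α ℝ :=
  fun a b => if 0 < M a b then 1 else 0

/-- The negative support of a real matrix. -/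
def suppNegR {α : Type} (M : Matrix α α ℝ) : Matrix α α ℝ :=
  fun a b => if M a b < 0 then 1 else 0

/-- A digraph on `V`: an irreflexive (Boolean) arc relation. -/
structure Dgraph (V : Type) where
  adj : V → V → Bool
  loopless : ∀ v, adj v v = false

namespace Dgraph

/-- `(x,y)` is an arc of `D`. -/
def Adj (D : Dgraph V) (x y : V) : Prop := D.adj x y = true

instance (D : Dgraph V) : DecidableRel D.Adj := fun _ _ => by unfold Adj; infer_instance

/-- The underlying (undirected simple) graph `G^±`. -/
def underlying (D : Dgraph V) : SimpleGraph V where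
  Adj x y := D.Adj x y ∨ D.Adj y x
  symm := ⟨fun _ _ h => h.symm⟩
  loopless := ⟨fun v h => by
    rcases h with h | h <;> exact absurd h (by simp [Adj, D.loopless v])⟩

instance (D : Dgraph V) : DecidableRel D.underlying.Adj :=
  fun x y => inferInstanceAs (Decidable (D.Adj x y ∨ D.Adj y x))

/-- The transpose digraph `G⁻¹`. -/
def transpose (D : Dgraph V) : Dgraph V where
  adj x y := D.adj y x
  loopless := D.loopless

end Dgraph

/-- The `η`-function of a digraph `D`: `η` on `A∖A⁻¹`, `-η` on `A⁻¹∖A`, `0` on digons. -/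
def etaFun (D : Dgraph V) (η : ℝ) (a : GArc D.underlying) : ℝ :=
  if D.Adj (arcO a) (arcT a) then (if D.Adj (arcT a) (arcO a) then 0 else η) else -η

/-- The `η`-Hermitian adjacency matrix `H_η`. -/
def Heta (D : Dgraph V) (η : ℝ) : Matrix V V ℂ :=
  fun x y =>
    if D.Adj x y then (if D.Adj y x then 1 else Complex.exp ((η : ℂ) * Complex.I))
    else if D.Adj y x then Complex.exp (-(η : ℂ) * Complex.I) else 0

/-- The diagonal matrix `D^{-1/2}` of inverse square roots of degrees. -/
def degHalfInv (D : Dgraph V) : Matrix V V ℂ :=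
  Matrix.diagonal fun x => ((1 / Real.sqrt (D.underlying.degree x) : ℝ) : ℂ)

/-- The normalized `η`-Hermitian adjacency matrix `H̃_η = D^{-1/2} H_η D^{-1/2}`. -/
def normHeta (D : Dgraph V) (η : ℝ) : Matrix V V ℂ :=
  degHalfInv D * Heta D η * degHalfInv D

/-- The multiset of preimages of `μ` under `φ(z) = (z + z⁻¹)/2` on the unit circle:
the distinct roots of `z² - 2μz + 1`. -/
def phiInv (μ : ℂ) : Multiset ℂ :=
  ((X ^ 2 - Polynomial.C (2 * μ) * X + 1 : Polynomial ℂ).roots).dedup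

/-- A closed path in a graph: a nonempty chain of arcs returning to its start. -/
structure ClosedPath (G : SimpleGraph V) where
  arcs : List (GArc G)
  ne : arcs ≠ []
  chain : arcs.Chain' fun a b => arcT a = arcO b
  closed : arcT (arcs.getLast ne) = arcO (arcs.head ne)

/-- `ℐ(c) = Σ_j θ(a_j)` for a closed path `c`. -/
def pathSum {G : SimpleGraph V} (θ : GArc G → ℝ) (c : ClosedPath G) : ℝ :=
  (c.arcs.map θ).sum

/-- `x ∈ 2πℤ`. -/
def in2piZ (x : ℝ) : Prop := ∃ m : ℤ, x = 2 * Real.pi * m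

/-- `x ∈ 2π(ℤ + 1/2)`. -/
def in2piZhalf (x : ℝ) : Prop := ∃ m : ℤ, x = 2 * Real.pi * (m + 1 / 2)

/-- The matrix `F_t` with `(F_t)_{x,a} = δ_{x,t(a)}`. -/
def Ft (G : SimpleGraph V) : Matrix V (GArc G) ℂ := fun x a => if x = arcT a then 1 else 0

/-- The matrix `F_o` with `(F_o)_{x,a} = δ_{x,o(a)}`. -/
def Fo (G : SimpleGraph V) : Matrix V (GArc G) ℂ := fun x a => if x = arcO a then 1 else 0

/-- The 0/1 matrix `R` with `R_{ab} = 1` iff `m(a,b) = (t(b),o(a)) ∈ A(G) ∩ A(G)⁻¹`. -/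
def Rmat (D : Dgraph V) : Matrix (GArc D.underlying) (GArc D.underlying) ℂ :=
  fun a b => if D.Adj (arcT b) (arcO a) ∧ D.Adj (arcO a) (arcT b) then 1 else 0

/-- `U_θ^{(n,+)}`: the 0/1 matrix with `(a,b)` entry `1` iff `Re(D_θ U_θⁿ)_{ab} > 0`. -/
def suppPow (D : Dgraph V) (η : ℝ) (n : ℕ) :
    Matrix (GArc D.underlying) (GArc D.underlying) ℂ :=
  suppPos (Dtheta D.underlying (etaFun D η) * transferU D.underlying (etaFun D η) ^ n)

/-- `U_θ^{(n,−)}`: the 0/1 matrix with `(a,b)` entry `1` iff `Re(D_θ U_θⁿ)_{ab} < 0`. -/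
def suppPowNeg (D : Dgraph V) (η : ℝ) (n : ℕ) :
    Matrix (GArc D.underlying) (GArc D.underlying) ℂ :=
  suppNeg (Dtheta D.underlying (etaFun D η) * transferU D.underlying (etaFun D η) ^ n)

/-- The number of digons of a digraph. -/
def digonCount (D : Dgraph V) : ℕ :=
  (Finset.univ.filter fun p : V × V => D.Adj p.1 p.2 ∧ D.Adj p.2 p.1).card / 2

/-- The digraph `Y_{a,n-a}`: two complete (digon) blocks `[a]` and `[n]∖[a]`, with all
arcs from the first block to the second. -/
def Ydigraph (n a : ℕ) : Dgraph (Fin n) where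
  adj x y := decide ((x ≠ y) ∧
    ((x.val < a ∧ y.val < a) ∨ (a ≤ x.val ∧ a ≤ y.val) ∨ (x.val < a ∧ a ≤ y.val)))
  loopless := fun v => by simp

/-- The shift operator as a real matrix. -/
def shiftSR (G : SimpleGraph V) : Matrix (GArc G) (GArc G) ℝ :=
  fun a b => if a = arcInv b then 1 else 0

/-- The Grover transfer matrix as a real matrix, given by its entries
`U_{ab} = (2/deg t(b)) δ_{t(b),o(a)} − δ_{a⁻¹,b}`. -/
def groverEnt (G : SimpleGraph V) [DecidableRel G.Adj] : Matrix (GArc G) (GArc G) ℝ :=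
  fun a b => 2 / (G.degree (arcT b)) * (if arcT b = arcO a then 1 else 0)
    - (if arcInv a = b then 1 else 0)

/-! ### Auxiliary lemmas -/

set_option linter.unusedSectionVars false

section AuxLemmas

lemma Y_adj_iff (n k : ℕ) (x y : Fin n) :
    (Ydigraph n k).underlying.Adj x y ↔ x ≠ y := by
  simp only [Dgraph.underlying, Ydigraph, Dgraph.Adj, decide_eq_true_eq]
  constructor
  · rintro (⟨h, -⟩ | ⟨h, -⟩)
    exacts [h, h.symm]
  · intro h
    have h' : x.val ≠ y.val := fun hv => h (Fin.ext hv)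
    rcases lt_or_ge x.val k with h1 | h1 <;> rcases lt_or_ge y.val k with h2 | h2
    · exact Or.inl ⟨h, Or.inl ⟨h1, h2⟩⟩
    · exact Or.inl ⟨h, Or.inr (Or.inr ⟨h1, h2⟩)⟩
    · exact Or.inr ⟨h.symm, Or.inr (Or.inr ⟨h2, h1⟩)⟩
    · exact Or.inl ⟨h, Or.inr (Or.inl ⟨h1, h2⟩)⟩

lemma Y_degree (n k : ℕ) (v : Fin n) :
    (Ydigraph n k).underlying.degree v = n - 1 := by
  have hnb : (Ydigraph n k).underlying.neighborFinset v = Finset.univ.erase v := by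
    ext w
    simp [SimpleGraph.mem_neighborFinset, Y_adj_iff, ne_comm]
  rw [SimpleGraph.degree, hnb, Finset.card_erase_of_mem (Finset.mem_univ v),
    Finset.card_univ, Fintype.card_fin]

@[simp] lemma arcInv_arcInv {G : SimpleGraph V} (a : GArc G) : arcInv (arcInv a) = a := by
  apply Subtype.ext
  rfl

lemma arcInv_eq_iff {G : SimpleGraph V} (a b : GArc G) : a = arcInv b ↔ b = arcInv a := by
  constructor <;> (intro h; subst h; rw [arcInv_arcInv])

lemma etaFun_arcInv (D : Dgraph V) (η : ℝ) (a : GArc D.underlying) :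
    etaFun D η (arcInv a) = - etaFun D η a := by
  have h : D.Adj a.1.1 a.1.2 ∨ D.Adj a.1.2 a.1.1 := a.2
  unfold etaFun
  simp only [arcO, arcT, arcInv]
  split_ifs <;> by_cases h' : D.Adj a.1.1 a.1.2 <;> simp_all

@[simp] lemma arcT_arcInv {G : SimpleGraph V} (a : GArc G) : arcT (arcInv a) = arcO a := rfl

@[simp] lemma arcO_arcInv {G : SimpleGraph V} (a : GArc G) : arcO (arcInv a) = arcT a := rfl

lemma degree_cast_sqrt_sq (d : ℕ) :
    ((1 / Real.sqrt d : ℝ) : ℂ) * ((1 / Real.sqrt d : ℝ) : ℂ) = 1 / (d : ℂ) := by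
  rw [← Complex.ofReal_mul, div_mul_div_comm, one_mul,
    Real.mul_self_sqrt (Nat.cast_nonneg d)]
  push_cast
  ring

lemma coinC_apply (G : SimpleGraph V) [DecidableRel G.Adj] (a b : GArc G) :
    coinC G a b = (if arcT a = arcT b then (2 / (G.degree (arcT b) : ℂ)) else 0)
      - (if a = b then 1 else 0) := by
  simp only [coinC, Matrix.sub_apply, Matrix.smul_apply, Matrix.mul_apply,
    Matrix.conjTranspose_apply, bdK, Matrix.one_apply, smul_eq_mul]
  congr 1
  rw [Finset.sum_eq_single (arcT a)]
  · rw [if_pos rfl]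
    by_cases h : arcT a = arcT b
    · rw [if_pos h, if_pos h, Complex.star_def, Complex.conj_ofReal, h, degree_cast_sqrt_sq]
      ring
    · rw [if_neg h, if_neg h, mul_zero, mul_zero]
  · intro v _ hv
    rw [if_neg hv, star_zero, zero_mul]
  · intro h
    exact absurd (Finset.mem_univ _) h

lemma transferU_apply (G : SimpleGraph V) [DecidableRel G.Adj] (θ : GArc G → ℝ)
    (a b : GArc G) :
    transferU G θ a b = Complex.exp ((θ (arcInv a) : ℂ) * Complex.I) *
      ((if arcO a = arcT b then (2 / (G.degree (arcT b) : ℂ)) else 0)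
        - (if arcInv a = b then 1 else 0)) := by
  simp only [transferU, Matrix.mul_apply, shiftStheta]
  rw [Finset.sum_eq_single (arcInv a)]
  · rw [if_pos (by rw [arcInv_arcInv]), coinC_apply, arcT_arcInv]
  · intro c _ hc
    rw [if_neg fun h => hc ((arcInv_eq_iff a c).mp h), zero_mul]
  · intro h
    exact absurd (Finset.mem_univ _) h

lemma Dtheta_mul_sq_diag (G : SimpleGraph V) [DecidableRel G.Adj] (d : ℂ)
    (hdeg : ∀ v, (G.degree v : ℂ) = d) (θ : GArc G → ℝ)
    (hθ : ∀ c, θ (arcInv c) = - θ c) (a : GArc G) :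
    (Dtheta G θ * transferU G θ ^ 2) a a =
      (2 / d - 1) ^ 2 * Complex.exp ((θ a : ℂ) * Complex.I) := by
  rw [pow_two, Dtheta, Matrix.diagonal_mul, Matrix.mul_apply]
  rw [Finset.sum_eq_single (arcInv a)]
  · rw [transferU_apply, transferU_apply]
    rw [hdeg, hdeg]
    simp only [arcT_arcInv, arcO_arcInv, arcInv_arcInv, if_pos rfl, hdeg, hθ]
    push_cast
    have e1 : Complex.exp (-(θ a : ℂ) * Complex.I) * Complex.exp ((θ a : ℂ) * Complex.I)
        = 1 := by
      rw [← Complex.exp_add, neg_mul, neg_add_cancel, Complex.exp_zero]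
    linear_combination ((2 / d - 1) ^ 2 * Complex.exp ((θ a : ℂ) * Complex.I)) * e1
  · intro c _ hc
    rw [transferU_apply, transferU_apply]
    rw [if_neg (fun h => hc (Eq.symm h)),
      if_neg (fun h => hc ((arcInv_eq_iff a c).mp (Eq.symm h)))]
    by_cases h1 : arcO a = arcT c
    · by_cases h2 : arcO c = arcT a
      · simp only [arcO, arcT] at h1 h2
        exact absurd (Subtype.ext (Prod.ext_iff.mpr ⟨h2, h1.symm⟩)) hc
      · rw [if_neg h2]
        ring
    · rw [if_neg h1]
      ring
  · intro h
    exact absurd (Finset.mem_univ _) h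

lemma card_filter_val_lt (n k : ℕ) (hk : k ≤ n) :
    (Finset.univ.filter fun x : Fin n => x.val < k).card = k := by
  have h : ∀ m ∈ Finset.range k, m < n := fun m hm =>
    lt_of_lt_of_le (Finset.mem_range.mp hm) hk
  have he : (Finset.univ.filter fun x : Fin n => x.val < k)
      = (Finset.range k).attachFin h := by
    ext x
    simp [Finset.mem_attachFin, Finset.mem_range]
  rw [he, Finset.card_attachFin, Finset.card_range]

lemma Y_digon_iff (n k : ℕ) (x y : Fin n) :
    (Ydigraph n k).Adj x y ∧ (Ydigraph n k).Adj y x ↔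
      x ≠ y ∧ ((x.val < k ∧ y.val < k) ∨ (k ≤ x.val ∧ k ≤ y.val)) := by
  simp only [Ydigraph, Dgraph.Adj, decide_eq_true_eq]
  constructor
  · rintro ⟨⟨h1, h2⟩, ⟨h3, h4⟩⟩
    exact ⟨h1, by omega⟩
  · rintro ⟨h1, h2⟩
    exact ⟨⟨h1, by omega⟩, ⟨fun h => h1 h.symm, by omega⟩⟩

lemma Y_digon_card (n k : ℕ) (hk : k ≤ n) :
    (Finset.univ.filter fun p : Fin n × Fin n =>
      (Ydigraph n k).Adj p.1 p.2 ∧ (Ydigraph n k).Adj p.2 p.1).card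
      = (k * k - k) + ((n - k) * (n - k) - (n - k)) := by
  classical
  set B1 := Finset.univ.filter fun x : Fin n => x.val < k with hB1def
  set B2 := Finset.univ.filter fun x : Fin n => ¬ x.val < k with hB2def
  have hB1 : B1.card = k := card_filter_val_lt n k hk
  have hB2 : B2.card = n - k := by
    have h : B1.card + B2.card = n := by
      rw [hB1def, hB2def]
      have h2 := Finset.card_filter_add_card_filter_not
        (s := (Finset.univ : Finset (Fin n))) (p := fun x : Fin n => x.val < k)
      simpa [Finset.card_univ] using h2
    omega
  have hset : (Finset.univ.filter fun p : Fin n × Fin n =>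
      (Ydigraph n k).Adj p.1 p.2 ∧ (Ydigraph n k).Adj p.2 p.1)
      = B1.offDiag ∪ B2.offDiag := by
    ext p
    simp only [Finset.mem_filter, Finset.mem_univ, true_and, Finset.mem_union,
      Finset.mem_offDiag, hB1def, hB2def, Y_digon_iff, not_lt]
    tauto
  have hdisj : Disjoint B1.offDiag B2.offDiag := by
    rw [Finset.disjoint_left]
    intro p hp1 hp2
    rw [Finset.mem_offDiag] at hp1 hp2
    have c1 := hp1.1
    have c2 := hp2.1
    rw [hB1def, Finset.mem_filter] at c1
    rw [hB2def, Finset.mem_filter] at c2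
    exact c2.2 c1.2
  rw [hset, Finset.card_union_of_disjoint hdisj, Finset.offDiag_card,
    Finset.offDiag_card, hB1, hB2]

lemma trace_suppPow_Y (n k : ℕ) (hn : 4 ≤ n) (η : ℝ) (hη1 : Real.pi / 2 ≤ η)
    (hη2 : η ≤ Real.pi) :
    (suppPow (Ydigraph n k) η 2).trace =
      (((Finset.univ.filter fun p : Fin n × Fin n =>
        (Ydigraph n k).Adj p.1 p.2 ∧ (Ydigraph n k).Adj p.2 p.1).card : ℕ) : ℂ) := by
  classical
  set D := Ydigraph n k with hD
  set G := D.underlying with hG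
  set θ := etaFun D η with hθdef
  have hdeg : ∀ v, (G.degree v : ℂ) = ((n : ℂ) - 1) := by
    intro v
    have hv : G.degree v = n - 1 := Y_degree n k v
    rw [hv, Nat.cast_sub (by omega : 1 ≤ n), Nat.cast_one]
  set r : ℝ := 2 / ((n : ℝ) - 1) - 1 with hrdef
  have hrneg : r < 0 := by
    rw [hrdef]
    have h3 : (3 : ℝ) ≤ (n : ℝ) - 1 := by
      have : (4 : ℝ) ≤ (n : ℝ) := by exact_mod_cast hn
      linarith
    have : 2 / ((n : ℝ) - 1) ≤ 2 / 3 := by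
      apply div_le_div_of_nonneg_left (by norm_num) (by norm_num) h3
    linarith
  have hr2 : 0 < r ^ 2 := by
    have : r ≠ 0 := ne_of_lt hrneg
    have h1 := sq_nonneg r
    rcases lt_or_eq_of_le h1 with h | h
    · exact h
    · exact absurd (pow_eq_zero_iff (by norm_num) |>.mp h.symm) this
  have hsupp : ∀ a : GArc G, suppPow D η 2 a a =
      if D.Adj (arcO a) (arcT a) ∧ D.Adj (arcT a) (arcO a) then 1 else 0 := by
    intro a
    have hdiag := Dtheta_mul_sq_diag G ((n : ℂ) - 1) hdeg θ (etaFun_arcInv D η) a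
    rw [suppPow, suppPos, hdiag]
    have hcast : ((2 : ℂ) / ((n : ℂ) - 1) - 1) ^ 2 = (((r ^ 2 : ℝ)) : ℂ) := by
      rw [hrdef]
      push_cast
      ring
    rw [hcast, Complex.re_ofReal_mul, Complex.exp_ofReal_mul_I_re]
    have hiff : 0 < r ^ 2 * Real.cos (θ a) ↔
        (D.Adj (arcO a) (arcT a) ∧ D.Adj (arcT a) (arcO a)) := by
      rw [mul_pos_iff_of_pos_left hr2]
      rw [hθdef]
      unfold etaFun
      by_cases h1 : D.Adj (arcO a) (arcT a) <;> by_cases h2 : D.Adj (arcT a) (arcO a)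
      · simp [h1, h2, Real.cos_zero]
      · simp only [h1, h2, if_true, if_false]
        constructor
        · intro h
          exact absurd (Real.cos_nonpos_of_pi_div_two_le_of_le hη1
            (by linarith [Real.pi_pos])) (not_le.mpr h)
        · rintro ⟨-, h⟩
          exact h.elim
      · simp only [h1, h2, if_true, if_false]
        constructor
        · intro h
          rw [Real.cos_neg] at h
          exact absurd (Real.cos_nonpos_of_pi_div_two_le_of_le hη1
            (by linarith [Real.pi_pos])) (not_le.mpr h)
        · rintro ⟨h, -⟩
          exact h.elim
      · have ha2 : D.Adj (arcO a) (arcT a) ∨ D.Adj (arcT a) (arcO a) := a.2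
        exact (ha2.elim h1 h2).elim
    rw [if_congr hiff rfl rfl]
  rw [Matrix.trace]
  have hsum : ∑ a : GArc G, (suppPow D η 2).diag a =
      ∑ a : GArc G, (if D.Adj a.1.1 a.1.2 ∧ D.Adj a.1.2 a.1.1 then (1 : ℂ) else 0) := by
    apply Finset.sum_congr rfl
    intro a _
    rw [Matrix.diag, hsupp a]
    rfl
  rw [hsum]
  rw [← Finset.sum_subtype (Finset.univ.filter fun p : Fin n × Fin n => G.Adj p.1 p.2)
    (by intro p; simp) (fun p => if D.Adj p.1 p.2 ∧ D.Adj p.2 p.1 then (1 : ℂ) else 0)]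
  rw [Finset.sum_boole, Finset.filter_filter]
  congr 2
  ext p
  simp only [Finset.mem_filter, Finset.mem_univ, true_and]
  constructor
  · rintro ⟨-, h⟩
    exact h
  · intro h
    exact ⟨Or.inl h.1, h⟩

end AuxLemmas

/-- For `n ≥ 4`, `π/2 ≤ η ≤ π`, and `a ≠ b` with `a, b ≥ n − a, n − b` (i.e. `a, b ≥ n/2`),
the characteristic polynomials of `U_θ^{(2,+)}(Y_{a,n−a})` and `U_θ^{(2,+)}(Y_{b,n−b})`
differ. -/
theorem stmt19 (n : ℕ) (hn : 4 ≤ n) (η : ℝ) (hη1 : Real.pi / 2 ≤ η) (hη2 : η ≤ Real.pi)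
    (a b : ℕ) (han : a ≤ n) (hbn : b ≤ n) (ha : n - a ≤ a) (hb : n - b ≤ b) (hab : a ≠ b) :
    (suppPow (Ydigraph n a) η 2).charpoly ≠ (suppPow (Ydigraph n b) η 2).charpoly := by
  intro hchar
  have h01 : ((⟨0, by omega⟩ : Fin n) ≠ ⟨1, by omega⟩) := by simp [Fin.ext_iff]
  haveI hne1 : Nonempty (GArc (Ydigraph n a).underlying) :=
    ⟨⟨(⟨0, by omega⟩, ⟨1, by omega⟩), (Y_adj_iff n a _ _).mpr h01⟩⟩
  haveI hne2 : Nonempty (GArc (Ydigraph n b).underlying) :=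
    ⟨⟨(⟨0, by omega⟩, ⟨1, by omega⟩), (Y_adj_iff n b _ _).mpr h01⟩⟩
  have hcard : Fintype.card (GArc (Ydigraph n a).underlying)
      = Fintype.card (GArc (Ydigraph n b).underlying) :=
    Fintype.card_congr (Equiv.subtypeEquivRight fun p => by
      rw [Y_adj_iff, Y_adj_iff])
  have htr : (suppPow (Ydigraph n a) η 2).trace = (suppPow (Ydigraph n b) η 2).trace := by
    rw [Matrix.trace_eq_neg_charpoly_coeff, Matrix.trace_eq_neg_charpoly_coeff,
      hchar, hcard]
  rw [trace_suppPow_Y n a hn η hη1 hη2, trace_suppPow_Y n b hn η hη1 hη2,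
    Y_digon_card n a han, Y_digon_card n b hbn] at htr
  have hNat : (a * a - a) + ((n - a) * (n - a) - (n - a))
      = (b * b - b) + ((n - b) * (n - b) - (n - b)) := by exact_mod_cast htr
  have key : ∀ x : ℕ, x ≤ x * x := fun x => by
    cases x with
    | zero => simp
    | succ m => exact Nat.le_mul_of_pos_left _ (Nat.succ_pos m)
  zify [key a, key b, key (n - a), key (n - b), han, hbn] at hNat
  have h0 : 2 * (((a : ℤ) - b) * ((a : ℤ) + b - n)) = 0 := by linear_combination hNat
  rcases mul_eq_zero.mp h0 with h | h
  · norm_num at h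
  · rcases mul_eq_zero.mp h with h | h <;> omega
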